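/- Consider sequences p = pₙ, m = mₙ, r = rₙ of positive integers with n > p + m, p ≥ r and m ≤ r, satisfying n − p → ∞, r → ∞, m/(n−p) → 0 and m/(n+r−p) → 0. Fix a real number s and set hₙ = 2s/(n·σₙ). Define the convergent series R_{n,1} = Σ_{k=3}^{∞} (−1)^{k+1}·(n·hₙ)^k/(k·(n+r−p)^k) and R_{n,2} = Σ_{k=3}^{∞} (−1)^{k+1}·(n·hₙ)^k/(k·(n−p)^k). Then, as n → ∞, −(m(n+r−p)/2)·R_{n,1} + (m(n−p)/2)·R_{n,2} → 0. -/

import Mathlib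

open Filter

/-- `σₙ²` of the paper. -/
noncomputable def sigmaSqN (p m r : ℕ → ℕ) (n : ℕ) : ℝ :=
  2 * Real.log ((((n : ℝ) + r n - p n - m n) * ((n : ℝ) - p n)) /
      ((((n : ℝ) - p n - m n)) * ((n : ℝ) + r n - p n)))

/-- `hₙ = 2s/(n σₙ)`. -/
noncomputable def hN (p m r : ℕ → ℕ) (s : ℝ) (n : ℕ) : ℝ :=
  2 * s / ((n : ℝ) * Real.sqrt (sigmaSqN p m r n))

/-- The remainder series `R = Σ_{k=3}^∞ (−1)^{k+1} x^k/(k b^k)` (with `x = n hₙ` and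
`b = n+r−p` or `b = n−p`), written as a `tsum` over the shifted index. -/
noncomputable def remainderR (x b : ℝ) : ℝ :=
  ∑' k : ℕ, (-1 : ℝ) ^ ((k + 3) + 1) * x ^ (k + 3) / (((k + 3) : ℝ) * b ^ (k + 3))

lemma aux_pow_sub_pow (a b : ℝ) (hb : 0 ≤ b) (hba : b ≤ a) :
    ∀ n : ℕ, a ^ (n+1) - b ^ (n+1) ≤ ((n:ℝ)+1) * a ^ n * (a - b) := by
  intro n
  induction n with
  | zero => simp
  | succ n ih =>
    have ha : 0 ≤ a := hb.trans hba
    have h2 : b ^ (n+1) ≤ a ^ (n+1) := pow_le_pow_left₀ hb hba _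
    have h3 : a * (a^(n+1) - b^(n+1)) ≤ a * (((n:ℝ)+1) * a^n * (a-b)) :=
      mul_le_mul_of_nonneg_left ih ha
    have h5 : 0 ≤ a ^ (n+1) := pow_nonneg ha _
    have e : a * (((n:ℝ)+1) * a^n * (a-b)) = ((n:ℝ)+1) * a^(n+1) * (a-b) := by ring
    have hid : a ^ (n+2) - b ^ (n+2) = a * (a^(n+1) - b^(n+1)) + (a-b) * b^(n+1) := by
      ring
    have key : a ^ (n+2) - b ^ (n+2) ≤ ((n:ℝ)+1) * a^(n+1) * (a-b) + (a-b) * b^(n+1) := by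
      linarith [h3, e]
    have : (a-b) * b^(n+1) ≤ (a-b) * a^(n+1) :=
      mul_le_mul_of_nonneg_left h2 (by linarith)
    push_cast
    linarith [key]

set_option maxHeartbeats 2000000 in
lemma key_bound (s m r b1 b2 σ2 x : ℝ)
    (hm : 1 ≤ m) (hmr : m ≤ r) (hb2 : 2*m ≤ b2) (hb1def : b1 = b2 + r)
    (hσ : σ2 = 2 * Real.log ((b1 - m) * b2 / ((b2 - m) * b1)))
    (hx : x = 2 * s / Real.sqrt σ2)
    (hq : 2*|s| * Real.sqrt (1/r + 1/b2) ≤ 1/2) :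
    |(-(m * b1 / 2) * remainderR x b1 + (m * b2 / 2) * remainderR x b2)|
      ≤ 8 * s^2 * |s| * Real.sqrt (1/r + 1/b2) := by
  have hm0 : (0:ℝ) < m := by linarith
  have hr0 : (0:ℝ) < r := by linarith
  have hb20 : (0:ℝ) < b2 := by linarith
  have hb10 : (0:ℝ) < b1 := by rw [hb1def]; linarith
  have hb21 : b2 ≤ b1 := by rw [hb1def]; linarith
  have hb2m : (0:ℝ) < b2 - m := by linarith
  -- the ratio inside the log
  obtain ⟨u, hudef⟩ : ∃ u : ℝ, u = m * r / ((b2 - m) * b1) := ⟨_, rfl⟩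
  have hu0 : (0:ℝ) < u := by rw [hudef]; positivity
  have hratio : (b1 - m) * b2 / ((b2 - m) * b1) = 1 + u := by
    rw [hudef, hb1def]
    field_simp
    ring
  have hu1 : u ≤ 1 := by
    rw [hudef, div_le_one (by positivity)]
    have h1 : m ≤ b2 - m := by linarith
    have h2 : r ≤ b1 := by rw [hb1def]; linarith
    exact mul_le_mul h1 h2 hr0.le hb2m.le
  -- lower bound on σ2
  have hlog : u / 2 ≤ Real.log (1 + u) := by
    have h1 : 1 - (1+u)⁻¹ ≤ Real.log (1+u) := Real.one_sub_inv_le_log_of_pos (by linarith)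
    have h2 : u / 2 ≤ 1 - (1+u)⁻¹ := by
      have hpos : (0:ℝ) < 1 + u := by linarith
      have hi : (1+u)⁻¹ * (1+u) = 1 := inv_mul_cancel₀ (ne_of_gt hpos)
      have hv0 : (0:ℝ) ≤ (1+u)⁻¹ := inv_nonneg.mpr hpos.le
      rw [le_sub_iff_add_le]
      nlinarith [hi, hv0, hu0.le, hu1]
    linarith
  have hσlb : m * r / (b1 * b2) ≤ σ2 := by
    have h1 : m * r / (b1 * b2) ≤ u := by
      rw [hudef]
      apply div_le_div_of_nonneg_left (by positivity) (by positivity)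
      nlinarith
    have h2 : σ2 = 2 * Real.log (1 + u) := by rw [hσ, hratio]
    rw [h2]; linarith
  have hσ0 : (0:ℝ) < σ2 := lt_of_lt_of_le (by positivity) hσlb
  have hσs : (0:ℝ) < Real.sqrt σ2 := Real.sqrt_pos.mpr hσ0
  obtain ⟨q, hqdef⟩ : ∃ q : ℝ, q = |x| / b2 := ⟨_, rfl⟩
  have hq0 : (0:ℝ) ≤ q := by rw [hqdef]; positivity
  -- q^2 bound
  have hq2 : q^2 ≤ 4*s^2*b1/(m*r*b2) := by
    have e1 : q^2 = 4*s^2/(σ2 * b2^2) := by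
      rw [hqdef, div_pow, sq_abs, hx, div_pow, Real.sq_sqrt hσ0.le]
      ring
    have e2 : 4*s^2/(σ2*b2^2) ≤ 4*s^2/((m*r/(b1*b2))*b2^2) := by
      apply div_le_div_of_nonneg_left (by positivity) (by positivity)
      exact mul_le_mul_of_nonneg_right hσlb (by positivity)
    have e3 : 4*s^2/((m*r/(b1*b2))*b2^2) = 4*s^2*b1/(m*r*b2) := by
      field_simp
    rw [e1]; rw [e3] at e2; exact e2
  have hq2' : q^2 ≤ 4*s^2*(1/r + 1/b2) := by
    have h1 : (1/r + 1/b2) * (m*r*b2) = m*(b2 + r) := by field_simp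
    have h2 : 4*s^2*b1/(m*r*b2) ≤ 4*s^2*(1/r + 1/b2) := by
      rw [div_le_iff₀ (by positivity), hb1def]
      nlinarith [sq_nonneg s, mul_le_mul_of_nonneg_left hm (by positivity : (0:ℝ) ≤ 4*s^2*(b2+r))]
    linarith
  obtain ⟨Q, hQdef⟩ : ∃ Q : ℝ, Q = 2*|s| * Real.sqrt (1/r + 1/b2) := ⟨_, rfl⟩
  have hqhalf : Q ≤ 1/2 := by rw [hQdef]; exact hq
  have hqQ : q ≤ Q := by
    have hQ2 : Q^2 = 4*s^2*(1/r+1/b2) := by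
      rw [hQdef, mul_pow, mul_pow, Real.sq_sqrt (by positivity), sq_abs]
      ring
    calc q = Real.sqrt (q^2) := (Real.sqrt_sq hq0).symm
      _ ≤ Real.sqrt (Q^2) := Real.sqrt_le_sqrt (by rw [hQ2]; exact hq2')
      _ = Q := Real.sqrt_sq (by rw [hQdef]; positivity)
  have hq12 : q ≤ 1/2 := hqQ.trans hqhalf
  have hq1 : q < 1 := lt_of_le_of_lt hq12 (by norm_num)
  -- term bounds
  have hnormle : ∀ (b : ℝ), b2 ≤ b → ∀ k : ℕ,
      |(-1 : ℝ) ^ ((k + 3) + 1) * x ^ (k + 3) / (((k + 3) : ℝ) * b ^ (k + 3))| ≤ q^(k+3) := by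
    intro b hb k
    have hb0 : (0:ℝ) < b := lt_of_lt_of_le hb20 hb
    have hk3 : (0:ℝ) < ((k:ℝ) + 3) := by positivity
    have e1 : |(-1 : ℝ) ^ ((k + 3) + 1) * x ^ (k + 3) / (((k + 3) : ℝ) * b ^ (k + 3))|
        = |x|^(k+3) / (((k:ℝ)+3) * b^(k+3)) := by
      rw [abs_div, abs_mul, abs_mul, abs_pow, abs_neg, abs_one, one_pow, one_mul, abs_pow,
        abs_pow, abs_of_pos hb0, abs_of_pos hk3]
    rw [e1]
    have h1 : |x|^(k+3) / (((k:ℝ)+3) * b^(k+3)) ≤ |x|^(k+3) / b^(k+3) := by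
      have hb3 : (0:ℝ) < b^(k+3) := pow_pos hb0 _
      apply div_le_div_of_nonneg_left (by positivity) hb3
      have hk1 : (1:ℝ) ≤ (k:ℝ)+3 := by
        have := Nat.cast_nonneg (α := ℝ) k
        linarith
      nth_rewrite 1 [← one_mul (b^(k+3))]
      exact mul_le_mul_of_nonneg_right hk1 hb3.le
    have h2 : |x|^(k+3) / b^(k+3) = (|x|/b)^(k+3) := (div_pow _ _ _).symm
    have h3 : (|x|/b)^(k+3) ≤ q^(k+3) := by
      apply pow_le_pow_left₀ (by positivity)
      rw [hqdef]
      exact div_le_div_of_nonneg_left (abs_nonneg x) hb20 hb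
    linarith
  have hsq : Summable (fun k : ℕ => q^(k+3)) := by
    have h := (summable_geometric_of_lt_one hq0 hq1).mul_left (q^3)
    refine h.congr (fun k => ?_)
    rw [← pow_add, add_comm]
  have hs1 : Summable (fun k : ℕ =>
      (-1 : ℝ) ^ ((k + 3) + 1) * x ^ (k + 3) / (((k + 3) : ℝ) * b1 ^ (k + 3))) :=
    Summable.of_norm_bounded hsq (fun k => by
      rw [Real.norm_eq_abs]; exact hnormle b1 hb21 k)
  have hs2 : Summable (fun k : ℕ =>
      (-1 : ℝ) ^ ((k + 3) + 1) * x ^ (k + 3) / (((k + 3) : ℝ) * b2 ^ (k + 3))) :=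
    Summable.of_norm_bounded hsq (fun k => by
      rw [Real.norm_eq_abs]; exact hnormle b2 le_rfl k)
  obtain ⟨D, hDdef⟩ : ∃ D : ℝ, D = m*r*b2/(2*b1) := ⟨_, rfl⟩
  have hD0 : (0:ℝ) ≤ D := by rw [hDdef]; positivity
  -- rewrite the target as a single tsum
  have hT : -(m * b1 / 2) * remainderR x b1 + (m * b2 / 2) * remainderR x b2
      = ∑' k : ℕ, (-(m * b1 / 2) *
            ((-1 : ℝ) ^ ((k + 3) + 1) * x ^ (k + 3) / (((k + 3) : ℝ) * b1 ^ (k + 3)))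
          + (m * b2 / 2) *
            ((-1 : ℝ) ^ ((k + 3) + 1) * x ^ (k + 3) / (((k + 3) : ℝ) * b2 ^ (k + 3)))) := by
    simp only [remainderR]
    rw [Summable.tsum_add (hs1.mul_left _) (hs2.mul_left _), tsum_mul_left, tsum_mul_left]
  -- per-term bound
  have hgk : ∀ k : ℕ, ‖-(m * b1 / 2) *
            ((-1 : ℝ) ^ ((k + 3) + 1) * x ^ (k + 3) / (((k + 3) : ℝ) * b1 ^ (k + 3)))
          + (m * b2 / 2) *
            ((-1 : ℝ) ^ ((k + 3) + 1) * x ^ (k + 3) / (((k + 3) : ℝ) * b2 ^ (k + 3)))‖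
          ≤ D * q^(k+3) := by
    intro k
    rw [Real.norm_eq_abs]
    have hb1k : (0:ℝ) < b1^(k+2) := pow_pos hb10 _
    have hb2k : (0:ℝ) < b2^(k+2) := pow_pos hb20 _
    have hb1k3 : (0:ℝ) < b1^(k+3) := pow_pos hb10 _
    have hb2k3 : (0:ℝ) < b2^(k+3) := pow_pos hb20 _
    have hk3 : (0:ℝ) < (k:ℝ)+3 := by positivity
    have heq : -(m * b1 / 2) *
            ((-1 : ℝ) ^ ((k + 3) + 1) * x ^ (k + 3) / (((k + 3) : ℝ) * b1 ^ (k + 3)))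
          + (m * b2 / 2) *
            ((-1 : ℝ) ^ ((k + 3) + 1) * x ^ (k + 3) / (((k + 3) : ℝ) * b2 ^ (k + 3)))
        = (-1:ℝ)^((k+3)+1) * x^(k+3) * (m / (2*((k:ℝ)+3)))
            * (1/b2^(k+2) - 1/b1^(k+2)) := by
      field_simp
      ring
    rw [heq, abs_mul, abs_mul, abs_mul, abs_pow, abs_neg, abs_one, one_pow, one_mul, abs_pow]
    have hmono : 1/b1^(k+2) ≤ 1/b2^(k+2) :=
      one_div_le_one_div_of_le hb2k (pow_le_pow_left₀ hb20.le hb21 _)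
    rw [abs_of_pos (by positivity : (0:ℝ) < m/(2*((k:ℝ)+3))),
      abs_of_nonneg (by linarith : (0:ℝ) ≤ 1/b2^(k+2) - 1/b1^(k+2))]
    have hbr : 1/b2^(k+2) - 1/b1^(k+2) ≤ ((k:ℝ)+2) * r / (b1 * b2^(k+2)) := by
      have h1 : 1/b2^(k+2) - 1/b1^(k+2) = (b1^(k+2) - b2^(k+2)) / (b1^(k+2) * b2^(k+2)) := by
        rw [div_sub_div _ _ (ne_of_gt hb2k) (ne_of_gt hb1k), one_mul, mul_one,
          mul_comm (b2^(k+2))]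
      have h2 : b1^(k+2) - b2^(k+2) ≤ ((k:ℝ)+2) * b1^(k+1) * r := by
        have h := aux_pow_sub_pow b1 b2 hb20.le hb21 (k+1)
        have h3 : b1 - b2 = r := by rw [hb1def]; ring
        rw [h3] at h
        push_cast at h
        simp only [show k+1+1 = k+2 from rfl] at h
        linarith
      have h4 : (b1^(k+2) - b2^(k+2)) / (b1^(k+2) * b2^(k+2))
          ≤ (((k:ℝ)+2) * b1^(k+1) * r) / (b1^(k+2) * b2^(k+2)) := by
        exact div_le_div_of_nonneg_right h2 (by positivity)
      have h5 : (((k:ℝ)+2) * b1^(k+1) * r) / (b1^(k+2) * b2^(k+2))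
          = ((k:ℝ)+2) * r / (b1 * b2^(k+2)) := by
        rw [div_eq_div_iff (by positivity : (0:ℝ) < b1^(k+2) * b2^(k+2)).ne'
          (by positivity : (0:ℝ) < b1 * b2^(k+2)).ne']
        ring
      rw [h1, ← h5]
      exact h4
    have hfrac : ((k:ℝ)+2)/((k:ℝ)+3) ≤ 1 := by
      rw [div_le_one hk3]; linarith
    calc |x|^(k+3) * (m/(2*((k:ℝ)+3))) * (1/b2^(k+2) - 1/b1^(k+2))
        ≤ |x|^(k+3) * (m/(2*((k:ℝ)+3))) * (((k:ℝ)+2) * r/(b1 * b2^(k+2))) := by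
          apply mul_le_mul_of_nonneg_left hbr (by positivity)
      _ = ((m*r/(2*b1)) * |x|^(k+3) / b2^(k+2)) * (((k:ℝ)+2)/((k:ℝ)+3)) := by
          field_simp
      _ ≤ ((m*r/(2*b1)) * |x|^(k+3) / b2^(k+2)) * 1 := by
          apply mul_le_mul_of_nonneg_left hfrac (by positivity)
      _ = D * q^(k+3) := by
          rw [hDdef, hqdef, div_pow, mul_one]
          rw [show (k+3) = (k+2)+1 from rfl, pow_succ b2 (k+2)]
          field_simp
  have hsum2 : HasSum (fun k : ℕ => D * q^(k+3)) (D * q^3 * (1-q)⁻¹) := by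
    have h := (hasSum_geometric_of_lt_one hq0 hq1).mul_left (D * q^3)
    have he : (fun k : ℕ => D * q^(k+3)) = (fun k : ℕ => D * q^3 * q^k) := by
      funext k
      rw [mul_assoc, ← pow_add, add_comm]
    rw [he]
    exact h
  have hbound : |∑' k : ℕ, (-(m * b1 / 2) *
            ((-1 : ℝ) ^ ((k + 3) + 1) * x ^ (k + 3) / (((k + 3) : ℝ) * b1 ^ (k + 3)))
          + (m * b2 / 2) *
            ((-1 : ℝ) ^ ((k + 3) + 1) * x ^ (k + 3) / (((k + 3) : ℝ) * b2 ^ (k + 3))))|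
        ≤ D * q^3 * (1-q)⁻¹ := by
    have h := tsum_of_norm_bounded hsum2 hgk
    rwa [Real.norm_eq_abs] at h
  have hfin : D * q^3 * (1-q)⁻¹ ≤ 8*s^2*|s| * Real.sqrt (1/r + 1/b2) := by
    have hinv : (1-q)⁻¹ ≤ 2 := by
      have h12 : (1:ℝ)/2 ≤ 1 - q := by linarith
      have h := inv_anti₀ (by norm_num : (0:ℝ) < 1/2) h12
      norm_num at h
      linarith
    have hDq2 : D * q^2 ≤ 2*s^2 := by
      have h := mul_le_mul_of_nonneg_left hq2 hD0
      have heq2 : D * (4*s^2*b1/(m*r*b2)) = 2*s^2 := by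
        rw [hDdef]
        field_simp
        ring
      linarith
    have h1 : D*q^3*(1-q)⁻¹ ≤ D*q^3*2 :=
      mul_le_mul_of_nonneg_left hinv (by positivity)
    have h2 : D*q^3 ≤ 2*s^2*q := by
      have he : D*q^3 = (D*q^2)*q := by ring
      rw [he]
      exact mul_le_mul_of_nonneg_right hDq2 hq0
    have hQ0 : (0:ℝ) ≤ Q := hq0.trans hqQ
    calc D*q^3*(1-q)⁻¹ ≤ D*q^3*2 := h1
      _ ≤ (2*s^2*q)*2 := by linarith
      _ = 4*s^2*q := by ring
      _ ≤ 4*s^2*Q := by nlinarith [sq_nonneg s, hqQ, hq0]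
      _ = 8*s^2*|s| * Real.sqrt (1/r + 1/b2) := by rw [hQdef]; ring
  rw [hT]
  exact le_trans hbound hfin



/-- Lemma 6: with `n > p + m`, `p ≥ r ≥ m`, `n − p → ∞`, `r → ∞`, `m/(n−p) → 0` and
`m/(n+r−p) → 0`, the remainders satisfy
`−(m(n+r−p)/2)·R_{n,1} + (m(n−p)/2)·R_{n,2} → 0`. -/
theorem remainder_difference_vanishes
    (p m r : ℕ → ℕ) (s : ℝ)
    (h : ∀ᶠ n in atTop, 1 ≤ m n ∧ m n ≤ r n ∧ r n ≤ p n ∧ p n + m n < n)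
    (hnp : Tendsto (fun (n : ℕ) => (n : ℝ) - p n) atTop atTop)
    (hr : Tendsto (fun (n : ℕ) => (r n : ℝ)) atTop atTop)
    (hm1 : Tendsto (fun (n : ℕ) => (m n : ℝ) / ((n : ℝ) - p n)) atTop (nhds 0))
    (hm2 : Tendsto (fun (n : ℕ) => (m n : ℝ) / ((n : ℝ) + r n - p n)) atTop (nhds 0)) :
    Tendsto (fun (n : ℕ) =>
        -((m n : ℝ) * ((n : ℝ) + r n - p n) / 2) *
            remainderR ((n : ℝ) * hN p m r s n) ((n : ℝ) + r n - p n)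
          + ((m n : ℝ) * ((n : ℝ) - p n) / 2) *
            remainderR ((n : ℝ) * hN p m r s n) ((n : ℝ) - p n))
      atTop (nhds 0) := by
  have h1r : Tendsto (fun n : ℕ => 1 / (r n : ℝ)) atTop (nhds 0) := by
    simpa [one_div, Pi.inv_def] using hr.inv_tendsto_atTop
  have h1b : Tendsto (fun n : ℕ => 1 / ((n : ℝ) - p n)) atTop (nhds 0) := by
    simpa [one_div, Pi.inv_def] using hnp.inv_tendsto_atTop
  have hsum : Tendsto (fun n : ℕ => 1/(r n : ℝ) + 1/((n:ℝ) - p n)) atTop (nhds 0) := by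
    simpa using h1r.add h1b
  have hsqrt : Tendsto (fun n : ℕ => Real.sqrt (1/(r n : ℝ) + 1/((n:ℝ) - p n)))
      atTop (nhds 0) := by
    have hc := (Real.continuous_sqrt.tendsto 0).comp hsum
    simpa [Function.comp_def] using hc
  have hQ0 : Tendsto (fun n : ℕ => 2*|s| * Real.sqrt (1/(r n:ℝ) + 1/((n:ℝ) - p n)))
      atTop (nhds 0) := by
    simpa using hsqrt.const_mul (2*|s|)
  have hg : Tendsto (fun n : ℕ => 8*s^2*|s| * Real.sqrt (1/(r n:ℝ) + 1/((n:ℝ) - p n)))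
      atTop (nhds 0) := by
    simpa using hsqrt.const_mul (8*s^2*|s|)
  apply squeeze_zero_norm' ?_ hg
  have hhalf : ∀ᶠ n : ℕ in atTop, 2*|s| * Real.sqrt (1/(r n:ℝ) + 1/((n:ℝ)-p n)) ≤ 1/2 :=
    hQ0.eventually_le_const (by norm_num)
  have hb2ev : ∀ᶠ n : ℕ in atTop, (1:ℝ) ≤ (n:ℝ) - p n := hnp.eventually_ge_atTop 1
  have hmev : ∀ᶠ n : ℕ in atTop, (m n:ℝ)/((n:ℝ)-p n) < 1/2 :=
    hm1.eventually_lt_const (by norm_num)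
  have hn1 : ∀ᶠ n : ℕ in atTop, 1 ≤ n := eventually_ge_atTop 1
  filter_upwards [h, hhalf, hb2ev, hmev, hn1] with n hn hhalf' hb2' hm' hn1'
  obtain ⟨hm1n, hmrn, hrpn, hpmn⟩ := hn
  have hb20 : (0:ℝ) < (n:ℝ) - p n := by linarith
  have hmR : (1:ℝ) ≤ (m n:ℝ) := by exact_mod_cast hm1n
  have hmrR : (m n:ℝ) ≤ (r n:ℝ) := by exact_mod_cast hmrn
  have h2m : 2*(m n:ℝ) ≤ (n:ℝ) - p n := by
    rw [div_lt_iff₀ hb20] at hm'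
    linarith
  have hn0 : ((n:ℝ)) ≠ 0 := by
    have h1 : (1:ℝ) ≤ (n:ℝ) := by exact_mod_cast hn1'
    linarith
  have hσ : sigmaSqN p m r n = 2 * Real.log
      (((((n:ℝ) - p n) + r n) - m n) * ((n:ℝ) - p n) /
        ((((n:ℝ) - p n) - m n) * (((n:ℝ) - p n) + r n))) := by
    simp only [sigmaSqN]
    rw [show ((n:ℝ) + r n - p n - m n) * ((n:ℝ) - p n) /
          (((n:ℝ) - p n - m n) * ((n:ℝ) + r n - p n))
        = (((((n:ℝ) - p n) + r n) - m n) * ((n:ℝ) - p n) /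
          ((((n:ℝ) - p n) - m n) * (((n:ℝ) - p n) + r n))) from by ring]
  have hx : (n:ℝ) * hN p m r s n = 2*s/Real.sqrt (sigmaSqN p m r n) := by
    simp only [hN]
    rw [show (n:ℝ) * (2 * s / ((n:ℝ) * Real.sqrt (sigmaSqN p m r n)))
        = ((n:ℝ) * (2*s)) / ((n:ℝ) * Real.sqrt (sigmaSqN p m r n)) from
      (mul_div_assoc _ _ _).symm]
    rw [mul_div_mul_left _ _ hn0]
  have hb1e : (n:ℝ) + r n - p n = ((n:ℝ) - p n) + r n := by ring
  rw [Real.norm_eq_abs, hb1e]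
  exact key_bound s (m n) (r n) (((n:ℝ) - p n) + r n) ((n:ℝ) - p n)
    (sigmaSqN p m r n) ((n:ℝ) * hN p m r s n) hmR hmrR h2m rfl hσ hx hhalf'
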